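/- For any i < n, ℚ_n(L₀,...,L_{n-1}) is order isomorphic to ℚ_n(L₀,...,L_{n-1}) ^ L_i ^ ℚ_n(L₀,...,L_{n-1}): inserting a single copy of one of the shuffled orders between two copies of the shuffle yields the shuffle again. -/

import Mathlib

/-- `Q` together with the colouring `c : Q → Fin n` is a copy of the `n`-coloured
rationals `ℚ_n`: a countable nonempty dense linear order without endpoints in which
each of the `n` colours occurs interdensely. -/
def IsQn (n : ℕ) (Q : Type*) [LinearOrder Q] (c : Q → Fin n) : Prop :=
  Countable Q ∧ Nonempty Q ∧ DenselyOrdered Q ∧ NoMinOrder Q ∧ NoMaxOrder Q ∧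
    ∀ x y : Q, x < y → ∀ i : Fin n, ∃ z : Q, x < z ∧ z < y ∧ c z = i

namespace QnAux

variable {n : ℕ} {α β : Type*} [LinearOrder α] [LinearOrder β]

theorem exists_between_finsets_colored {cβ : β → Fin n} (hβ : IsQn n β cβ)
    (lo hi : Finset β) (lo_lt_hi : ∀ x ∈ lo, ∀ y ∈ hi, x < y) (j : Fin n) :
    ∃ m : β, cβ m = j ∧ (∀ x ∈ lo, x < m) ∧ ∀ y ∈ hi, m < y := by
  obtain ⟨_, hne, hdo, hmin, hmax, hc⟩ := hβ
  obtain ⟨m0, hm0lo, hm0hi⟩ := Order.exists_between_finsets lo hi lo_lt_hi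
  by_cases nhi : hi.Nonempty
  · have h1 : m0 < hi.min' nhi := hm0hi _ (Finset.min'_mem _ _)
    obtain ⟨z, hz1, hz2, hz3⟩ := hc m0 (hi.min' nhi) h1 j
    exact ⟨z, hz3, fun x hx => (hm0lo x hx).trans hz1,
      fun y hy => hz2.trans_le (Finset.min'_le _ _ hy)⟩
  · obtain ⟨y, hy⟩ := exists_gt m0
    obtain ⟨z, hz1, hz2, hz3⟩ := hc m0 y hy j
    exact ⟨z, hz3, fun x hx => (hm0lo x hx).trans hz1,
      fun y hy => absurd ⟨y, hy⟩ nhi⟩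

/-- Colored partial isomorphisms. -/
def CPI (cα : α → Fin n) (cβ : β → Fin n) : Type _ :=
  { f : Finset (α × β) // (∀ p ∈ f, cβ p.2 = cα p.1) ∧
      ∀ p ∈ f, ∀ q ∈ f, cmp p.1 q.1 = cmp p.2 q.2 }

namespace CPI

variable {cα : α → Fin n} {cβ : β → Fin n}

instance : Inhabited (CPI cα cβ) :=
  ⟨⟨∅, fun _p h => (Finset.notMem_empty _ h).elim,
    fun _p h => (Finset.notMem_empty _ h).elim⟩⟩

instance : Preorder (CPI cα cβ) := Subtype.preorder _

theorem exists_across (hβ : IsQn n β cβ) (f : CPI cα cβ) (a : α) :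
    ∃ b : β, cβ b = cα a ∧ ∀ p ∈ f.val, cmp p.1 a = cmp p.2 b := by
  by_cases h : ∃ b, (a, b) ∈ f.val
  · obtain ⟨b, hb⟩ := h
    exact ⟨b, f.prop.1 _ hb, fun p hp => f.prop.2 _ hp _ hb⟩
  have key :
      ∀ x ∈ (f.val.filter fun p : α × β => p.fst < a).image Prod.snd,
        ∀ y ∈ (f.val.filter fun p : α × β => a < p.fst).image Prod.snd, x < y := by
    intro x hx y hy
    rw [Finset.mem_image] at hx hy
    rcases hx with ⟨p, hp1, rfl⟩
    rcases hy with ⟨q, hq1, rfl⟩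
    rw [Finset.mem_filter] at hp1 hq1
    rw [← lt_iff_lt_of_cmp_eq_cmp (f.prop.2 _ hp1.1 _ hq1.1)]
    exact lt_trans hp1.right hq1.right
  obtain ⟨b, hbc, hb1, hb2⟩ := exists_between_finsets_colored hβ _ _ key (cα a)
  refine ⟨b, hbc, ?_⟩
  rintro ⟨p1, p2⟩ hp
  have hne : p1 ≠ a := fun he => h ⟨p2, he ▸ hp⟩
  rcases lt_or_gt_of_ne hne with hl | hr
  · have : p1 < a ∧ p2 < b :=
      ⟨hl, hb1 _ (Finset.mem_image.mpr ⟨(p1, p2), Finset.mem_filter.mpr ⟨hp, hl⟩, rfl⟩)⟩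
    rw [← cmp_eq_lt_iff, ← cmp_eq_lt_iff] at this
    exact this.1.trans this.2.symm
  · have : a < p1 ∧ b < p2 :=
      ⟨hr, hb2 _ (Finset.mem_image.mpr ⟨(p1, p2), Finset.mem_filter.mpr ⟨hp, hr⟩, rfl⟩)⟩
    rw [← cmp_eq_gt_iff, ← cmp_eq_gt_iff] at this
    exact this.1.trans this.2.symm

/-- Swap sides of a colored partial iso. -/
protected def comm (f : CPI cα cβ) : CPI cβ cα :=
  ⟨f.val.image (Equiv.prodComm α β), by
    constructor
    · rintro p hp
      simp only [Finset.mem_image] at hp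
      obtain ⟨q, hq, rfl⟩ := hp
      exact (f.prop.1 q hq).symm
    · rintro p hp q hq
      simp only [Finset.mem_image] at hp hq
      obtain ⟨p', hp', rfl⟩ := hp
      obtain ⟨q', hq', rfl⟩ := hq
      exact (f.prop.2 p' hp' q' hq').symm⟩

theorem mem_comm {f : CPI cα cβ} {p : β × α} : p ∈ f.comm.val ↔ p.swap ∈ f.val := by
  constructor
  · intro hp
    simp only [CPI.comm, Finset.mem_image] at hp
    obtain ⟨q, hq, rfl⟩ := hp
    simpa using hq
  · intro hp
    simp only [CPI.comm, Finset.mem_image]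
    exact ⟨p.swap, hp, by simp⟩

/-- Partial isos defined at `a : α`. -/
def definedAtLeft (hβ : IsQn n β cβ) (a : α) : Order.Cofinal (CPI cα cβ) where
  carrier := {f | ∃ b : β, (a, b) ∈ f.val}
  isCofinal f := by
    obtain ⟨b, hbc, a_b⟩ := exists_across hβ f a
    refine ⟨⟨insert (a, b) f.val, ?_, ?_⟩, ⟨b, Finset.mem_insert_self _ _⟩,
      Finset.subset_insert _ _⟩
    · intro p hp
      rcases Finset.mem_insert.mp hp with rfl | pf
      · exact hbc
      · exact f.prop.1 _ pf
    · intro p hp q hq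
      rw [Finset.mem_insert] at hp hq
      rcases hp with (rfl | pf) <;> rcases hq with (rfl | qf)
      · simp only [cmp_self_eq_eq]
      · rw [cmp_eq_cmp_symm]
        exact a_b _ qf
      · exact a_b _ pf
      · exact f.prop.2 _ pf _ qf

/-- Partial isos defined at `b : β`. -/
def definedAtRight (hα : IsQn n α cα) (b : β) : Order.Cofinal (CPI cα cβ) where
  carrier := {f | ∃ a, (a, b) ∈ f.val}
  isCofinal f := by
    rcases (definedAtLeft hα b).isCofinal f.comm with ⟨f', ⟨a, ha⟩, hl⟩
    refine ⟨f'.comm, ⟨a, ?_⟩, ?_⟩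
    · exact mem_comm.mpr ha
    · intro p hp
      exact mem_comm.mpr (hl (mem_comm.mpr (by simpa using hp)))

end CPI

open CPI in
/-- Uniqueness of ℚ_n: any two copies are isomorphic by a colour-preserving order iso. -/
theorem isQn_iso {cα : α → Fin n} {cβ : β → Fin n}
    (hα : IsQn n α cα) (hβ : IsQn n β cβ) :
    ∃ f : α ≃o β, ∀ a, cβ (f a) = cα a := by
  haveI : Countable α := hα.1
  haveI : Countable β := hβ.1
  cases nonempty_encodable α
  cases nonempty_encodable β
  let to_cofinal : α ⊕ β → Order.Cofinal (CPI cα cβ) := fun p =>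
    Sum.recOn p (definedAtLeft hβ) (definedAtRight hα)
  let our_ideal : Order.Ideal (CPI cα cβ) := Order.idealOfCofinals default to_cofinal
  have hF : ∀ a : α, ∃ b : β, ∃ f ∈ our_ideal, (a, b) ∈ f.val := by
    intro a
    obtain ⟨f, ⟨b, hb⟩, hf⟩ :=
      Order.cofinal_meets_idealOfCofinals default to_cofinal (Sum.inl a)
    exact ⟨b, f, hf, hb⟩
  have hG : ∀ b : β, ∃ a : α, ∃ f ∈ our_ideal, (a, b) ∈ f.val := by
    intro b
    obtain ⟨f, ⟨a, ha⟩, hf⟩ :=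
      Order.cofinal_meets_idealOfCofinals default to_cofinal (Sum.inr b)
    exact ⟨a, f, hf, ha⟩
  choose F hF' using hF
  choose G hG' using hG
  have cmp_key : ∀ a b, cmp a (G b) = cmp (F a) b := by
    intro a b
    obtain ⟨f, hf, ha⟩ := hF' a
    obtain ⟨g, hg, hb⟩ := hG' b
    rcases our_ideal.directed _ hf _ hg with ⟨m, _, fm, gm⟩
    exact m.prop.2 (a, _) (fm ha) (_, b) (gm hb)
  refine ⟨OrderIso.ofCmpEqCmp F G cmp_key, ?_⟩
  intro a
  obtain ⟨f, _, ha⟩ := hF' a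
  exact f.prop.1 _ ha

variable {Q : Type*} [LinearOrder Q]

/-- The colouring of `Q ^ 1 ^ Q`, where the middle point gets colour `i`. -/
def cext (c : Q → Fin n) (i : Fin n) : (Q ⊕ₗ (PUnit.{1} ⊕ₗ Q)) → Fin n
  | Sum.inl q => c q
  | Sum.inr (Sum.inl _) => i
  | Sum.inr (Sum.inr q) => c q

theorem isQn_cext {c : Q → Fin n} (hQ : IsQn n Q c) (i : Fin n) :
    IsQn n (Q ⊕ₗ (PUnit.{1} ⊕ₗ Q)) (cext c i) := by
  obtain ⟨hco, hne, hdo, hmin, hmax, hc⟩ := hQ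
  haveI := hco; haveI := hne; haveI := hdo; haveI := hmin; haveI := hmax
  haveI : Countable (PUnit.{1} ⊕ₗ Q) := Countable.of_equiv _ (toLex (α := PUnit.{1} ⊕ Q))
  haveI : Countable (Q ⊕ₗ (PUnit.{1} ⊕ₗ Q)) :=
    Countable.of_equiv _ (toLex (α := Q ⊕ (PUnit.{1} ⊕ₗ Q)))
  refine ⟨inferInstance, ⟨toLex (Sum.inr (toLex (Sum.inl PUnit.unit)))⟩,
    inferInstance, inferInstance, inferInstance, ?_⟩
  rintro x y hxy j
  obtain ⟨a | p, rfl⟩ : ∃ w, toLex w = x := ⟨ofLex x, rfl⟩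
  · obtain ⟨b | p', rfl⟩ : ∃ w, toLex w = y := ⟨ofLex y, rfl⟩
    · obtain ⟨z, hz1, hz2, hz3⟩ := hc a b (Sum.Lex.inl_lt_inl_iff.mp hxy) j
      exact ⟨toLex (Sum.inl z), Sum.Lex.inl_lt_inl_iff.mpr hz1,
        Sum.Lex.inl_lt_inl_iff.mpr hz2, hz3⟩
    · obtain ⟨b, hab⟩ := exists_gt a
      obtain ⟨z, hz1, hz2, hz3⟩ := hc a b hab j
      exact ⟨toLex (Sum.inl z), Sum.Lex.inl_lt_inl_iff.mpr hz1,
        Sum.Lex.inl_lt_inr z p', hz3⟩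
  · obtain ⟨b | p', rfl⟩ : ∃ w, toLex w = y := ⟨ofLex y, rfl⟩
    · exact absurd hxy Sum.Lex.not_inr_lt_inl
    · have hpp' : p < p' := Sum.Lex.inr_lt_inr_iff.mp hxy
      obtain ⟨u | a, rfl⟩ : ∃ w, toLex w = p := ⟨ofLex p, rfl⟩
      · obtain ⟨u' | b, rfl⟩ : ∃ w, toLex w = p' := ⟨ofLex p', rfl⟩
        · exact absurd (Sum.Lex.inl_lt_inl_iff.mp hpp') (by simp)
        · obtain ⟨b0, hb0⟩ := exists_lt b
          obtain ⟨z, hz1, hz2, hz3⟩ := hc b0 b hb0 j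
          exact ⟨toLex (Sum.inr (toLex (Sum.inr z))),
            Sum.Lex.inr_lt_inr_iff.mpr (Sum.Lex.inl_lt_inr u z),
            Sum.Lex.inr_lt_inr_iff.mpr (Sum.Lex.inr_lt_inr_iff.mpr hz2), hz3⟩
      · obtain ⟨u' | b, rfl⟩ : ∃ w, toLex w = p' := ⟨ofLex p', rfl⟩
        · exact absurd hpp' Sum.Lex.not_inr_lt_inl
        · obtain ⟨z, hz1, hz2, hz3⟩ := hc a b (Sum.Lex.inr_lt_inr_iff.mp hpp') j
          exact ⟨toLex (Sum.inr (toLex (Sum.inr z))),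
            Sum.Lex.inr_lt_inr_iff.mpr (Sum.Lex.inr_lt_inr_iff.mpr hz1),
            Sum.Lex.inr_lt_inr_iff.mpr (Sum.Lex.inr_lt_inr_iff.mpr hz2), hz3⟩

section
variable (c : Q → Fin n) (i : Fin n) (L : Fin n → Type*) [∀ i, LinearOrder (L i)]

/-- Transport a shuffle along a colour-preserving order iso. -/
theorem sigma_congr {Q' : Type*} [LinearOrder Q'] {c' : Q' → Fin n}
    (f : Q ≃o Q') (hf : ∀ q, c' (f q) = c q) :
    Nonempty ((Σₗ q : Q, L (c q)) ≃o (Σₗ q' : Q', L (c' q'))) := by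
  have cast_lt : ∀ {j k : Fin n} (h : k = j) {a b : L j}, a < b →
      cast (congrArg L h.symm) a < cast (congrArg L h.symm) b := by
    rintro j k rfl a b hab; exact hab
  let g : (Σₗ q : Q, L (c q)) → (Σₗ q' : Q', L (c' q')) := fun x =>
    toLex ⟨f (ofLex x).1, cast (congrArg L (hf (ofLex x).1).symm) (ofLex x).2⟩
  have hmono : StrictMono g := by
    rintro ⟨qa, la⟩ ⟨qb, lb⟩ hab
    rcases Sigma.Lex.lt_def.mp hab with h | ⟨h, hlt⟩
    · exact Sigma.Lex.lt_def.mpr (Or.inl (f.strictMono h))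
    · dsimp at h
      subst h
      dsimp at hlt
      exact Sigma.Lex.lt_def.mpr (Or.inr ⟨rfl, cast_lt (hf qa) hlt⟩)
  have hsurj : Function.Surjective g := by
    rintro ⟨q', l'⟩
    obtain ⟨q, rfl⟩ := f.surjective q'
    refine ⟨toLex ⟨q, cast (congrArg L (hf q)) l'⟩, ?_⟩
    show toLex (⟨f q, _⟩ : Σ q' : Q', L (c' q')) = toLex ⟨f q, l'⟩
    congr 1
    refine Sigma.ext rfl ?_
    exact (cast_heq _ _).trans (cast_heq _ _)
  exact ⟨StrictMono.orderIsoOfSurjective g hmono hsurj⟩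

/-- The splitting map of the shuffle of the extended order. -/
def splitFun : (Σₗ q' : Q ⊕ₗ (PUnit.{1} ⊕ₗ Q), L (cext c i q')) →
    ((Σₗ q : Q, L (c q)) ⊕ₗ (L i ⊕ₗ (Σₗ q : Q, L (c q))))
  | ⟨Sum.inl q, l⟩ => toLex (Sum.inl (toLex ⟨q, l⟩))
  | ⟨Sum.inr (Sum.inl _), l⟩ => toLex (Sum.inr (toLex (Sum.inl l)))
  | ⟨Sum.inr (Sum.inr q), l⟩ => toLex (Sum.inr (toLex (Sum.inr (toLex ⟨q, l⟩))))

theorem split :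
    Nonempty ((Σₗ q' : Q ⊕ₗ (PUnit.{1} ⊕ₗ Q), L (cext c i q')) ≃o
      ((Σₗ q : Q, L (c q)) ⊕ₗ (L i ⊕ₗ (Σₗ q : Q, L (c q))))) := by
  have hsurj : Function.Surjective (splitFun c i L) := by
    rintro x
    obtain ⟨w | w, rfl⟩ : ∃ v, toLex v = x := ⟨ofLex x, rfl⟩
    · obtain ⟨⟨q, l⟩, rfl⟩ : ∃ v, toLex v = w := ⟨ofLex w, rfl⟩
      exact ⟨toLex ⟨toLex (Sum.inl q), l⟩, rfl⟩
    · obtain ⟨l | w', rfl⟩ : ∃ v, toLex v = w := ⟨ofLex w, rfl⟩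
      · exact ⟨toLex ⟨toLex (Sum.inr (toLex (Sum.inl PUnit.unit))), l⟩, rfl⟩
      · obtain ⟨⟨q, l⟩, rfl⟩ : ∃ v, toLex v = w' := ⟨ofLex w', rfl⟩
        exact ⟨toLex ⟨toLex (Sum.inr (toLex (Sum.inr q))), l⟩, rfl⟩
  have hmono : StrictMono (splitFun c i L) := by
    rintro ⟨qa, la⟩ ⟨qb, lb⟩ hab
    rcases Sigma.Lex.lt_def.mp hab with h | ⟨h, hlt⟩
    · dsimp at h
      obtain ⟨a | pa, rfl⟩ : ∃ w, toLex w = qa := ⟨ofLex qa, rfl⟩ <;>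
        obtain ⟨b | pb, rfl⟩ : ∃ w, toLex w = qb := ⟨ofLex qb, rfl⟩
      · exact Sum.Lex.inl_lt_inl_iff.mpr
          (Sigma.Lex.lt_def.mpr (Or.inl (Sum.Lex.inl_lt_inl_iff.mp h)))
      · obtain ⟨ub | b, rfl⟩ : ∃ w, toLex w = pb := ⟨ofLex pb, rfl⟩
        · exact Sum.Lex.inl_lt_inr _ _
        · exact Sum.Lex.inl_lt_inr _ _
      · exact absurd h Sum.Lex.not_inr_lt_inl
      · have hp : pa < pb := Sum.Lex.inr_lt_inr_iff.mp h
        obtain ⟨ua | a, rfl⟩ : ∃ w, toLex w = pa := ⟨ofLex pa, rfl⟩ <;>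
          obtain ⟨ub | b, rfl⟩ : ∃ w, toLex w = pb := ⟨ofLex pb, rfl⟩
        · exact absurd (Sum.Lex.inl_lt_inl_iff.mp hp) (by simp)
        · exact Sum.Lex.inr_lt_inr_iff.mpr (Sum.Lex.inl_lt_inr _ _)
        · exact absurd hp Sum.Lex.not_inr_lt_inl
        · exact Sum.Lex.inr_lt_inr_iff.mpr (Sum.Lex.inr_lt_inr_iff.mpr
            (Sigma.Lex.lt_def.mpr (Or.inl (Sum.Lex.inr_lt_inr_iff.mp hp))))
    · dsimp at h
      subst h
      dsimp at hlt
      obtain ⟨a | pa, rfl⟩ : ∃ w, toLex w = qa := ⟨ofLex qa, rfl⟩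
      · exact Sum.Lex.inl_lt_inl_iff.mpr (Sigma.Lex.lt_def.mpr (Or.inr ⟨rfl, hlt⟩))
      · obtain ⟨ua | a, rfl⟩ : ∃ w, toLex w = pa := ⟨ofLex pa, rfl⟩
        · exact Sum.Lex.inr_lt_inr_iff.mpr (Sum.Lex.inl_lt_inl_iff.mpr hlt)
        · exact Sum.Lex.inr_lt_inr_iff.mpr (Sum.Lex.inr_lt_inr_iff.mpr
            (Sigma.Lex.lt_def.mpr (Or.inr ⟨rfl, hlt⟩)))
  exact ⟨StrictMono.orderIsoOfSurjective _ hmono hsurj⟩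

end

end QnAux

/-- Inserting a copy of one of the shuffled orders between two copies of the shuffle
yields the shuffle again: ℚ_n(L) ≅ ℚ_n(L) ^ L_i ^ ℚ_n(L). -/
theorem shuffle_insert_concat (n : ℕ) (Q : Type*) [LinearOrder Q] (c : Q → Fin n)
    (hQ : IsQn n Q c) (L : Fin n → Type*) [∀ i, LinearOrder (L i)] [∀ i, Nonempty (L i)]
    (i : Fin n) :
    Nonempty ((Σₗ q : Q, L (c q)) ≃o
      ((Σₗ q : Q, L (c q)) ⊕ₗ (L i ⊕ₗ (Σₗ q : Q, L (c q))))) := by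
  obtain ⟨f, hf⟩ := QnAux.isQn_iso hQ (QnAux.isQn_cext hQ i)
  obtain ⟨e1⟩ := QnAux.sigma_congr c L f hf
  obtain ⟨e2⟩ := QnAux.split c i L
  exact ⟨e1.trans e2⟩
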